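/- arXiv:2508.15962 — 3 statements merged into one kernel-verified Lean document; each statement's English description precedes it below -/
import Mathlib

section
/- Let g : ℂ → ℂ be an entire function, x ∈ ℝ, σ > 0, and let U ~ N(0, σ²) and Z ~ N(0, 1) be independent. Assume E[ Σ_{k=0}^∞ |g^{(k)}(x)|/k! · |U + iσZ|^k ] < ∞. Then E[g(x + U + iσZ)] = g(x); that is, g evaluated at the complex-error-augmented observation is an unbiased estimator of g evaluated at the true value. -/
open MeasureTheory ProbabilityTheory Complex Real Filter
open scoped NNReal ENNReal

noncomputable section

namespace EntireUnbiasedAux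


/-- Hermite-type polynomials for variance `v`. -/
def QP (v : ℝ) : ℕ → ℂ → ℂ
  | 0, _ => 1
  | 1, c => c
  | (k+2), c => (v : ℂ) * (k+1) * QP v k c + c * QP v (k+1) c

lemma QP_succ (v : ℝ) (k : ℕ) (c : ℂ) :
    QP v (k+1) c = (v : ℂ) * k * QP v (k-1) c + c * QP v k c := by
  cases k with
  | zero => simp [QP]
  | succ k =>
      show QP v (k+2) c = _
      simp only [QP, Nat.add_sub_cancel]
      push_cast
      ring

lemma QP_hasDerivAt (v : ℝ) : ∀ (k : ℕ) (c : ℂ),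
    HasDerivAt (QP v k) ((k : ℂ) * QP v (k-1) c) c
  | 0, c => by
      exact (hasDerivAt_const c (1:ℂ)).congr_deriv (by simp)
  | 1, c => by
      exact (hasDerivAt_id c).congr_deriv (by simp [QP])
  | (k+2), c => by
      have h1 := QP_hasDerivAt v k c
      have h2 := QP_hasDerivAt v (k+1) c
      have ha : HasDerivAt (fun w => (v:ℂ) * (k+1) * QP v k w)
          ((v:ℂ) * (k+1) * ((k : ℂ) * QP v (k-1) c)) c := h1.const_mul _
      have hb : HasDerivAt (fun w => w * QP v (k+1) w)
          (1 * QP v (k+1) c + c * (((k:ℕ)+1 : ℂ) * QP v k c)) c := by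
        exact ((hasDerivAt_id c).mul h2).congr_deriv (by simp)
      have h := ha.add hb
      have he : ∀ w, QP v (k+2) w = (v:ℂ) * (k+1) * QP v k w + w * QP v (k+1) w :=
        fun w => rfl
      rw [show (QP v (k+2)) = fun w => (v:ℂ) * (k+1) * QP v k w + w * QP v (k+1) w
        from funext he]
      refine h.congr_deriv ?_
      have hk1 : QP v (k+1) c = (v : ℂ) * k * QP v (k-1) c + c * QP v k c := QP_succ v k c
      push_cast
      rw [hk1]
      ring

lemma QP_bound (v : ℝ) : ∀ k : ℕ, ∃ C : ℝ, 0 ≤ C ∧ ∀ c : ℂ, ‖QP v k c‖ ≤ C * (1 + ‖c‖)^k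
  | 0 => ⟨1, zero_le_one, fun c => by simp [QP]⟩
  | 1 => ⟨1, zero_le_one, fun c => by
      simp only [QP, pow_one, one_mul]
      linarith [norm_nonneg c]⟩
  | (k+2) => by
      obtain ⟨C1, hC1, h1⟩ := QP_bound v k
      obtain ⟨C2, hC2, h2⟩ := QP_bound v (k+1)
      refine ⟨|v| * (k+1) * C1 + C2, by positivity, fun c => ?_⟩
      have hc : (0:ℝ) ≤ 1 + ‖c‖ := by positivity
      have hc1 : (1:ℝ) ≤ 1 + ‖c‖ := by linarith [norm_nonneg c]
      have e1 : (1 + ‖c‖)^k ≤ (1 + ‖c‖)^(k+2) := pow_le_pow_right₀ hc1 (by omega)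
      have e2 : ‖c‖ * (1 + ‖c‖)^(k+1) ≤ (1 + ‖c‖)^(k+2) := by
        rw [pow_succ (1 + ‖c‖) (k+1)]
        rw [mul_comm]
        gcongr
        linarith [norm_nonneg c]
      calc ‖QP v (k+2) c‖ = ‖(v : ℂ) * (k+1) * QP v k c + c * QP v (k+1) c‖ := rfl
        _ ≤ ‖(v : ℂ) * (k+1) * QP v k c‖ + ‖c * QP v (k+1) c‖ := norm_add_le _ _
        _ ≤ |v| * (k+1) * (C1 * (1 + ‖c‖)^k) + ‖c‖ * (C2 * (1 + ‖c‖)^(k+1)) := by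
            have t1 : ‖(v : ℂ) * ((k:ℂ)+1) * QP v k c‖ ≤ |v| * (k+1) * (C1 * (1 + ‖c‖)^k) := by
              rw [norm_mul, norm_mul]
              have : ‖(v:ℂ)‖ = |v| := by simp [Complex.norm_real, Real.norm_eq_abs]
              rw [this]
              have h3 : ‖((k:ℂ)+1)‖ = (k:ℝ)+1 := by
                rw [show ((k:ℂ)+1) = ((k+1 : ℕ) : ℂ) by push_cast; ring, Complex.norm_natCast]
                push_cast; ring
              rw [h3]
              exact mul_le_mul_of_nonneg_left (h1 c) (by positivity)
            have t2 : ‖c * QP v (k+1) c‖ ≤ ‖c‖ * (C2 * (1 + ‖c‖)^(k+1)) := by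
              rw [norm_mul]; gcongr; exact h2 c
            exact add_le_add t1 t2
        _ ≤ |v| * (k+1) * (C1 * (1 + ‖c‖)^(k+2)) + C2 * (‖c‖ * (1 + ‖c‖)^(k+1)) := by
            rw [mul_left_comm ‖c‖ C2]
            gcongr
        _ ≤ |v| * (k+1) * (C1 * (1 + ‖c‖)^(k+2)) + C2 * (1 + ‖c‖)^(k+2) := by gcongr
        _ = (|v| * (k+1) * C1 + C2) * (1 + ‖c‖)^(k+2) := by ring



/-- gaussian weight integrability for polynomials -/
lemma integrable_abspow_gauss {v : ℝ} (hv : 0 < v) (n : ℕ) :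
    Integrable (fun x : ℝ => |x| ^ n * rexp (-x^2/(2*v))) := by
  have hb : 0 < (2*v)⁻¹ := by positivity
  have hIoi : IntegrableOn (fun x : ℝ => |x| ^ n * rexp (-(2*v)⁻¹ * x^2)) (Set.Ioi 0) := by
    refine (integrableOn_rpow_mul_exp_neg_mul_sq hb (s := (n:ℝ)) (lt_of_lt_of_le neg_one_lt_zero (Nat.cast_nonneg n))).congr_fun
      (fun x hx => ?_) measurableSet_Ioi
    beta_reduce; rw [Real.rpow_natCast, abs_of_pos hx]
  have main : Integrable (fun x : ℝ => |x| ^ n * rexp (-(2*v)⁻¹ * x^2)) := by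
    rw [← integrableOn_univ, ← @Set.Iio_union_Ici _ _ (0 : ℝ), integrableOn_union,
      integrableOn_Ici_iff_integrableOn_Ioi]
    refine ⟨?_, hIoi⟩
    rw [← (Measure.measurePreserving_neg (volume : Measure ℝ)).integrableOn_comp_preimage
        (Homeomorph.neg ℝ).measurableEmbedding]
    simpa only [Function.comp_def, neg_sq, abs_neg, Set.neg_preimage, Set.neg_Iio, neg_zero]
      using hIoi
  refine main.congr (Filter.Eventually.of_forall fun x => ?_)
  simp only []
  rw [show -(2*v)⁻¹ * x^2 = -x^2/(2*v) by ring]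

lemma integrable_onePlusAbs_gauss {v : ℝ} (hv : 0 < v) (n : ℕ) :
    Integrable (fun x : ℝ => (1 + |x|) ^ n * rexp (-x^2/(2*v))) := by
  have : ∀ x : ℝ, (1 + |x|) ^ n * rexp (-x^2/(2*v)) =
      ∑ j ∈ Finset.range (n+1), (n.choose j : ℝ) * (|x| ^ (n-j) * rexp (-x^2/(2*v))) := by
    intro x
    rw [add_pow, Finset.sum_mul]
    refine Finset.sum_congr rfl (fun j hj => ?_)
    ring
  rw [funext this]
  exact integrable_finset_sum _ (fun j _ => ((integrable_abspow_gauss hv (n-j)).const_mul _))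

lemma integrable_polybound_gauss {v : ℝ} (hv : 0 < v) {f : ℝ → ℂ} (hf : Continuous f)
    {n : ℕ} {C : ℝ} (hb : ∀ x : ℝ, ‖f x‖ ≤ C * (1+|x|)^n) :
    Integrable (fun x : ℝ => f x * rexp (-x^2/(2*v))) := by
  refine Integrable.mono' (((integrable_onePlusAbs_gauss hv n).const_mul C))
    ?_ (Filter.Eventually.of_forall fun x => ?_)
  · exact (hf.mul (Complex.continuous_ofReal.comp
      (Real.continuous_exp.comp (by fun_prop)))).aestronglyMeasurable
  · rw [norm_mul]
    have he : ‖((rexp (-x^2/(2*v)) : ℝ) : ℂ)‖ = rexp (-x^2/(2*v)) := by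
      rw [Complex.norm_real, Real.norm_eq_abs, abs_of_pos (Real.exp_pos _)]
    rw [he]
    calc ‖f x‖ * rexp (-x^2/(2*v)) ≤ (C * (1+|x|)^n) * rexp (-x^2/(2*v)) :=
          mul_le_mul_of_nonneg_right (hb x) (Real.exp_pos _).le
      _ = C * ((1+|x|)^n * rexp (-x^2/(2*v))) := by ring

/-- Stein's identity for the raw gaussian weight. -/
lemma stein_raw {v : ℝ} (hv : 0 < v) (f f' : ℝ → ℂ) (hd : ∀ x : ℝ, HasDerivAt f (f' x) x)
    (h1 : Integrable fun x : ℝ => (x:ℂ) * f x * rexp (-x^2/(2*v)))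
    (h2 : Integrable fun x : ℝ => f' x * rexp (-x^2/(2*v)))
    (h3 : Integrable fun x : ℝ => f x * rexp (-x^2/(2*v))) :
    ∫ x : ℝ, (x:ℂ) * f x * rexp (-x^2/(2*v)) =
      (v:ℂ) * ∫ x : ℝ, f' x * rexp (-x^2/(2*v)) := by
  set E : ℝ → ℂ := fun x => ((rexp (-x^2/(2*v)) : ℝ) : ℂ) with hE
  have hEd : ∀ x : ℝ, HasDerivAt E (((-x/v) * rexp (-x^2/(2*v)) : ℝ) : ℂ) x := by
    intro x
    have h0 : HasDerivAt (fun x : ℝ => -x^2/(2*v)) (-(2*x^1)/(2*v)) x :=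
      ((hasDerivAt_pow 2 x).neg).div_const (2*v)
    have h0' : HasDerivAt (fun x : ℝ => -x^2/(2*v)) (-x/v) x := by
      convert h0 using 1; field_simp
    have := h0'.exp
    have h5 : HasDerivAt (fun x : ℝ => rexp (-x^2/(2*v))) ((-x/v) * rexp (-x^2/(2*v))) x := by
      convert this using 1; ring
    exact h5.ofReal_comp
  have hFd : ∀ x : ℝ, HasDerivAt (fun x => f x * E x)
      (f' x * E x + f x * (((-x/v) * rexp (-x^2/(2*v)) : ℝ) : ℂ)) x :=
    fun x => (hd x).mul (hEd x)
  have hint : Integrable (fun x : ℝ => f' x * E x + f x * (((-x/v) * rexp (-x^2/(2*v)) : ℝ) : ℂ)) := by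
    refine h2.add ?_
    have : (fun x : ℝ => f x * (((-x/v) * rexp (-x^2/(2*v)) : ℝ) : ℂ)) =
        fun x : ℝ => (-(v:ℂ)⁻¹) * ((x:ℂ) * f x * rexp (-x^2/(2*v))) := by
      funext x
      push_cast
      field_simp
    rw [this]
    exact h1.const_mul _
  have hzero : ∫ x : ℝ, (f' x * E x + f x * (((-x/v) * rexp (-x^2/(2*v)) : ℝ) : ℂ)) = 0 :=
    integral_eq_zero_of_hasDerivAt_of_integrable hFd hint h3
  have hsplit : ∫ x : ℝ, (f' x * E x + f x * (((-x/v) * rexp (-x^2/(2*v)) : ℝ) : ℂ)) =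
      (∫ x : ℝ, f' x * E x) + ∫ x : ℝ, f x * (((-x/v) * rexp (-x^2/(2*v)) : ℝ) : ℂ) := by
    refine integral_add h2 ?_
    have : (fun x : ℝ => f x * (((-x/v) * rexp (-x^2/(2*v)) : ℝ) : ℂ)) =
        fun x : ℝ => (-(v:ℂ)⁻¹) * ((x:ℂ) * f x * rexp (-x^2/(2*v))) := by
      funext x; push_cast; field_simp
    rw [this]; exact h1.const_mul _
  have hrw : ∫ x : ℝ, f x * (((-x/v) * rexp (-x^2/(2*v)) : ℝ) : ℂ) =
      (-(v:ℂ)⁻¹) * ∫ x : ℝ, (x:ℂ) * f x * rexp (-x^2/(2*v)) := by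
    rw [← integral_const_mul]
    congr 1
    funext x; push_cast; field_simp
  rw [hsplit, hrw] at hzero
  have hvne : (v:ℂ) ≠ 0 := by
    simp only [ne_eq, Complex.ofReal_eq_zero]; exact hv.ne'
  have hA : ∫ x : ℝ, f' x * E x =
      (v:ℂ)⁻¹ * ∫ x : ℝ, (x:ℂ) * f x * rexp (-x^2/(2*v)) := by
    have h' : (∫ x : ℝ, f' x * E x) +
        -((v:ℂ)⁻¹ * ∫ x : ℝ, (x:ℂ) * f x * rexp (-x^2/(2*v))) = 0 := by
      rw [← neg_mul]; exact hzero
    exact add_neg_eq_zero.mp h'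
  calc ∫ x : ℝ, (x:ℂ) * f x * rexp (-x^2/(2*v))
      = (v:ℂ) * ((v:ℂ)⁻¹ * ∫ x : ℝ, (x:ℂ) * f x * rexp (-x^2/(2*v))) := by
        rw [← mul_assoc, mul_inv_cancel₀ hvne, one_mul]
    _ = (v:ℂ) * ∫ x : ℝ, f' x * E x := by rw [hA]

lemma norm_shift_le (c : ℂ) (x : ℝ) (k : ℕ) :
    ‖((x:ℂ)+c)^k‖ ≤ (1+‖c‖)^k * (1+|x|)^k := by
  rw [norm_pow, ← mul_pow]
  refine pow_le_pow_left₀ (norm_nonneg _) ?_ k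
  calc ‖(x:ℂ)+c‖ ≤ ‖(x:ℂ)‖ + ‖c‖ := norm_add_le _ _
    _ = |x| + ‖c‖ := by rw [Complex.norm_real, Real.norm_eq_abs]
    _ ≤ (1+‖c‖)*(1+|x|) := by nlinarith [abs_nonneg x, norm_nonneg c]

lemma continuous_shiftpow (c : ℂ) (k : ℕ) : Continuous fun x : ℝ => ((x:ℂ)+c)^k :=
  ((Complex.continuous_ofReal.add continuous_const).pow k)

lemma integrable_shift {v : ℝ} (hv : 0 < v) (k : ℕ) (c : ℂ) :
    Integrable fun x : ℝ => ((x:ℂ)+c)^k * rexp (-x^2/(2*v)) :=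
  integrable_polybound_gauss hv (continuous_shiftpow c k) (n := k) (C := (1+‖c‖)^k)
    (fun x => norm_shift_le c x k)

lemma integrable_mul_shift {v : ℝ} (hv : 0 < v) (k : ℕ) (c : ℂ) :
    Integrable fun x : ℝ => (x:ℂ) * ((x:ℂ)+c)^k * rexp (-x^2/(2*v)) := by
  refine integrable_polybound_gauss hv
    (Complex.continuous_ofReal.mul (continuous_shiftpow c k)) (n := k+1) (C := (1+‖c‖)^k)
    (fun x => ?_)
  rw [norm_mul]
  calc ‖(x:ℂ)‖ * ‖((x:ℂ)+c)^k‖ ≤ (1+|x|) * ((1+‖c‖)^k * (1+|x|)^k) := by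
        refine mul_le_mul ?_ (norm_shift_le c x k) (norm_nonneg _) (by positivity)
        rw [Complex.norm_real, Real.norm_eq_abs]; linarith [abs_nonneg x]
    _ = (1+‖c‖)^k * (1+|x|)^(k+1) := by ring

lemma hasDerivAt_shiftpow (k : ℕ) (c : ℂ) (x : ℝ) :
    HasDerivAt (fun x : ℝ => ((x:ℂ)+c)^k) ((k:ℂ) * ((x:ℂ)+c)^(k-1)) x := by
  have h : HasDerivAt (fun z : ℂ => (z+c)^k) ((k:ℂ) * ((x:ℂ)+c)^(k-1) * 1) (x:ℂ) := by
    exact (((hasDerivAt_id ((x:ℂ))).add_const c).pow k).congr_deriv (by simp)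
  simpa using h.comp_ofReal

lemma integral_shift_pow {v : ℝ} (hv : 0 < v) : ∀ (k : ℕ) (c : ℂ),
    ∫ x : ℝ, ((x:ℂ) + c)^k * rexp (-x^2/(2*v))
      = QP v k c * ∫ x : ℝ, ((rexp (-x^2/(2*v)) : ℝ) : ℂ)
  | 0, c => by simp [QP]
  | 1, c => by
      have hid : (∫ x : ℝ, (x:ℂ) * rexp (-x^2/(2*v))) = 0 := by
        have h := stein_raw hv (fun _ => 1) (fun _ => 0) (fun x => hasDerivAt_const _ 1)
          (by simpa using integrable_mul_shift hv 0 0)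
          (by simpa using (integrable_shift hv 0 0).const_mul (0:ℂ))
          (by simpa using integrable_shift hv 0 0)
        simpa using h
      have hE : Integrable fun x : ℝ => ((rexp (-x^2/(2*v)) : ℝ) : ℂ) := by
        simpa using integrable_shift hv 0 0
      have hsplit : ∫ x : ℝ, ((x:ℂ) + c)^1 * rexp (-x^2/(2*v))
          = (∫ x : ℝ, (x:ℂ) * rexp (-x^2/(2*v)))
            + ∫ x : ℝ, c * ((rexp (-x^2/(2*v)) : ℝ) : ℂ) := by
        rw [← integral_add (by simpa using integrable_mul_shift hv 0 0) (hE.const_mul c)]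
        congr 1; funext x; ring
      rw [hsplit, hid, integral_const_mul, zero_add]
      simp [QP]
  | (k+2), c => by
      have ih0 := integral_shift_pow hv k c
      have ih1 := integral_shift_pow hv (k+1) c
      have hst := stein_raw hv (fun x : ℝ => ((x:ℂ)+c)^(k+1))
          (fun x : ℝ => ((k:ℂ)+1) * ((x:ℂ)+c)^k)
          (fun x => by simpa using hasDerivAt_shiftpow (k+1) c x)
          (integrable_mul_shift hv (k+1) c)
          (by
            have := (integrable_shift hv k c).const_mul ((k:ℂ)+1)
            refine this.congr (Filter.Eventually.of_forall fun x => ?_); ring)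
          (integrable_shift hv (k+1) c)
      have hsplit : ∫ x : ℝ, ((x:ℂ) + c)^(k+2) * rexp (-x^2/(2*v))
          = (∫ x : ℝ, (x:ℂ) * ((x:ℂ)+c)^(k+1) * rexp (-x^2/(2*v)))
            + ∫ x : ℝ, c * (((x:ℂ)+c)^(k+1) * rexp (-x^2/(2*v))) := by
        rw [← integral_add (integrable_mul_shift hv (k+1) c)
          ((integrable_shift hv (k+1) c).const_mul c)]
        congr 1; funext x; ring
      have hconst : ∫ x : ℝ, ((k:ℂ)+1) * ((x:ℂ)+c)^k * rexp (-x^2/(2*v))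
          = ((k:ℂ)+1) * ∫ x : ℝ, ((x:ℂ)+c)^k * rexp (-x^2/(2*v)) := by
        rw [← integral_const_mul]
        congr 1; funext x; ring
      rw [hsplit, hst, integral_const_mul, hconst, ih0, ih1]
      have hQ : QP v (k+2) c = (v:ℂ) * ((k:ℂ)+1) * QP v k c + c * QP v (k+1) c := by
        show ((v : ℂ) * ((k:ℂ)+1) * QP v k c + c * QP v (k+1) c) = _
        rfl
      rw [hQ]; ring

lemma hasDerivAt_QP_comp (v σ : ℝ) (m : ℕ) (z : ℝ) :
    HasDerivAt (fun z : ℝ => QP v m (Complex.I*σ*z))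
      (Complex.I*σ*((m:ℂ) * QP v (m-1) (Complex.I*σ*z))) z := by
  have hinner : HasDerivAt (fun w : ℂ => Complex.I*(σ:ℂ)*w) (Complex.I*σ) (z:ℂ) := by
    simpa using (hasDerivAt_id ((z:ℝ):ℂ)).const_mul (Complex.I*(σ:ℂ))
  have houter := QP_hasDerivAt v m (Complex.I*σ*z)
  have hcomp := HasDerivAt.comp ((z:ℝ):ℂ) houter hinner
  have := hcomp.comp_ofReal
  simpa [mul_comm, mul_left_comm] using this

lemma QP_comp_bound (v σ : ℝ) (hσ : 0 < σ) (m : ℕ) :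
    ∃ C : ℝ, 0 ≤ C ∧ ∀ z : ℝ, ‖QP v m (Complex.I*σ*z)‖ ≤ C * (1+|z|)^m := by
  obtain ⟨C, hC, hb⟩ := QP_bound v m
  refine ⟨C * (1+σ)^m, by positivity, fun z => ?_⟩
  have hn : ‖(Complex.I*(σ:ℂ)*(z:ℂ))‖ = σ * |z| := by
    rw [norm_mul, norm_mul, Complex.norm_I, one_mul, Complex.norm_real, Complex.norm_real,
      Real.norm_eq_abs, Real.norm_eq_abs, abs_of_pos hσ]
  calc ‖QP v m (Complex.I*σ*z)‖ ≤ C * (1+‖(Complex.I*(σ:ℂ)*(z:ℂ))‖)^m := hb _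
    _ = C * (1+σ*|z|)^m := by rw [hn]
    _ ≤ C * ((1+σ)^m * (1+|z|)^m) := by
        rw [← mul_pow]
        refine mul_le_mul_of_nonneg_left (pow_le_pow_left₀ (by positivity) ?_ m) hC
        nlinarith [abs_nonneg z, hσ.le]
    _ = C * (1+σ)^m * (1+|z|)^m := by ring

lemma continuous_QP_comp (v σ : ℝ) (m : ℕ) :
    Continuous fun z : ℝ => QP v m (Complex.I*σ*z) :=
  continuous_iff_continuousAt.mpr fun z => (hasDerivAt_QP_comp v σ m z).continuousAt

lemma integrable_QP_comp (v σ : ℝ) (hσ : 0 < σ) (m : ℕ) :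
    Integrable fun z : ℝ => QP v m (Complex.I*σ*z) * rexp (-z^2/(2*1)) := by
  obtain ⟨C, hC, hb⟩ := QP_comp_bound v σ hσ m
  exact integrable_polybound_gauss one_pos (continuous_QP_comp v σ m) hb

lemma integrable_mul_QP_comp (v σ : ℝ) (hσ : 0 < σ) (m : ℕ) :
    Integrable fun z : ℝ => (z:ℂ) * QP v m (Complex.I*σ*z) * rexp (-z^2/(2*1)) := by
  obtain ⟨C, hC, hb⟩ := QP_comp_bound v σ hσ m
  refine integrable_polybound_gauss one_pos
    (Complex.continuous_ofReal.mul (continuous_QP_comp v σ m)) (n := m+1) (C := C)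
    (fun z => ?_)
  rw [norm_mul]
  calc ‖(z:ℂ)‖ * ‖QP v m (Complex.I*σ*z)‖ ≤ (1+|z|) * (C * (1+|z|)^m) := by
        refine mul_le_mul ?_ (hb z) (norm_nonneg _) (by positivity)
        rw [Complex.norm_real, Real.norm_eq_abs]; linarith [abs_nonneg z]
    _ = C * (1+|z|)^(m+1) := by ring

lemma outer_zero {σ : ℝ} (hσ : 0 < σ) : ∀ k : ℕ, k ≠ 0 →
    ∫ z : ℝ, QP (σ^2) k (Complex.I*σ*z) * rexp (-z^2/(2*1)) = 0
  | 0, h => absurd rfl h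
  | 1, _ => by
      have hid : (∫ z : ℝ, (z:ℂ) * rexp (-z^2/(2*1))) = 0 := by
        have h := stein_raw one_pos (fun _ => 1) (fun _ => 0) (fun z => hasDerivAt_const _ 1)
          (by simpa [QP] using integrable_mul_QP_comp (σ^2) σ hσ 0)
          (by simpa [QP] using (integrable_QP_comp (σ^2) σ hσ 0).const_mul (0:ℂ))
          (by simpa [QP] using integrable_QP_comp (σ^2) σ hσ 0)
        simpa using h
      have : ∫ z : ℝ, QP (σ^2) 1 (Complex.I*σ*z) * rexp (-z^2/(2*1))
          = Complex.I*σ * ∫ z : ℝ, (z:ℂ) * rexp (-z^2/(2*1)) := by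
        rw [← integral_const_mul]
        congr 1; funext z
        show (Complex.I*σ*z) * _ = _
        ring
      rw [this, hid, mul_zero]
  | (m+2), _ => by
      have hd : ∀ z : ℝ, HasDerivAt (fun z : ℝ => QP (σ^2) (m+1) (Complex.I*σ*z))
          (Complex.I*σ*(((m:ℂ)+1) * QP (σ^2) m (Complex.I*σ*z))) z := by
        intro z
        have := hasDerivAt_QP_comp (σ^2) σ (m+1) z
        simpa using this
      have hst := stein_raw one_pos (fun z : ℝ => QP (σ^2) (m+1) (Complex.I*σ*z))
          (fun z : ℝ => Complex.I*σ*(((m:ℂ)+1) * QP (σ^2) m (Complex.I*σ*z))) hd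
          (integrable_mul_QP_comp (σ^2) σ hσ (m+1))
          (by
            have := (integrable_QP_comp (σ^2) σ hσ m).const_mul (Complex.I*σ*((m:ℂ)+1))
            refine this.congr (Filter.Eventually.of_forall fun z => ?_); ring)
          (integrable_QP_comp (σ^2) σ hσ (m+1))
      have hsplit : ∫ z : ℝ, QP (σ^2) (m+2) (Complex.I*σ*z) * rexp (-z^2/(2*1))
          = (∫ z : ℝ, ((σ:ℂ)^2*((m:ℂ)+1)) * (QP (σ^2) m (Complex.I*σ*z) * rexp (-z^2/(2*1))))
            + ∫ z : ℝ, (Complex.I*σ) * ((z:ℂ) * QP (σ^2) (m+1) (Complex.I*σ*z) * rexp (-z^2/(2*1))) := by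
        rw [← integral_add ((integrable_QP_comp (σ^2) σ hσ m).const_mul _)
          ((integrable_mul_QP_comp (σ^2) σ hσ (m+1)).const_mul _)]
        congr 1; funext z
        show ((((σ^2 : ℝ)) : ℂ) * ((m:ℂ)+1) * QP (σ^2) m (Complex.I*σ*z)
          + (Complex.I*σ*z) * QP (σ^2) (m+1) (Complex.I*σ*z)) * _ = _
        push_cast
        ring
      have hconst : ∫ z : ℝ, (Complex.I*σ*(((m:ℂ)+1) * QP (σ^2) m (Complex.I*σ*z))) * rexp (-z^2/(2*1))
          = (Complex.I*σ*((m:ℂ)+1)) * ∫ z : ℝ, QP (σ^2) m (Complex.I*σ*z) * rexp (-z^2/(2*1)) := by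
        rw [← integral_const_mul]
        congr 1; funext z; ring
      rw [hsplit, integral_const_mul, integral_const_mul, hst, hconst]
      set A := ∫ z : ℝ, QP (σ^2) m (Complex.I*σ*z) * rexp (-z^2/(2*1))
      push_cast
      linear_combination (σ:ℂ)^2 * ((m:ℂ)+1) * A * Complex.I_sq

lemma integral_gaussianReal_eq {v : ℝ≥0} (hv : v ≠ 0) (f : ℝ → ℂ) :
    ∫ x, f x ∂(gaussianReal 0 v) = ∫ x : ℝ, (gaussianPDFReal 0 v x) • f x := by
  rw [gaussianReal_of_var_ne_zero _ hv]
  rw [show gaussianPDF 0 v = fun x => ((Real.toNNReal (gaussianPDFReal 0 v x)) : ℝ≥0∞) from rfl]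
  rw [integral_withDensity_eq_integral_smul ((measurable_gaussianPDFReal 0 v).real_toNNReal) f]
  congr 1; funext x
  rw [NNReal.smul_def, Real.coe_toNNReal _ (gaussianPDFReal_nonneg 0 v x)]

lemma gaussianPDFReal_smul (v : ℝ≥0) (x : ℝ) (w : ℂ) :
    (gaussianPDFReal 0 v x) • w
      = ((√(2*π*v) : ℝ)⁻¹ : ℂ) * (w * ((rexp (-x^2/(2*(v:ℝ))) : ℝ) : ℂ)) := by
  rw [gaussianPDFReal]
  simp only [sub_zero]
  rw [Complex.real_smul]
  push_cast
  ring

lemma gaussianReal_shift_moment {v : ℝ≥0} (hv : 0 < (v:ℝ)) (k : ℕ) (c : ℂ) :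
    ∫ x, ((x:ℂ)+c)^k ∂(gaussianReal 0 v) = QP v k c := by
  have hne : v ≠ 0 := by
    intro h; rw [h] at hv; simp at hv
  have h1 : ∀ (j : ℕ) (d : ℂ), ∫ x, ((x:ℂ)+d)^j ∂(gaussianReal 0 v)
      = ((√(2*π*v) : ℝ)⁻¹ : ℂ) * (QP v j d * ∫ x : ℝ, ((rexp (-x^2/(2*(v:ℝ))) : ℝ) : ℂ)) := by
    intro j d
    rw [integral_gaussianReal_eq hne]
    have he : ∀ x : ℝ, (gaussianPDFReal 0 v x) • (((x:ℂ)+d)^j)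
        = ((√(2*π*v) : ℝ)⁻¹ : ℂ) * (((x:ℂ)+d)^j * ((rexp (-x^2/(2*(v:ℝ))) : ℝ) : ℂ)) :=
      fun x => gaussianPDFReal_smul v x _
    rw [funext he, integral_const_mul, integral_shift_pow hv j d]
  have h0 := h1 0 0
  have h0' : (1:ℂ) = ((√(2*π*v) : ℝ)⁻¹ : ℂ) * ∫ x : ℝ, ((rexp (-x^2/(2*(v:ℝ))) : ℝ) : ℂ) := by
    have : ∫ x, ((x:ℂ)+0)^0 ∂(gaussianReal 0 v) = 1 := by
      simp
    rw [this] at h0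
    simpa [QP] using h0
  rw [h1 k c]
  linear_combination (QP v k c) * h0'.symm

lemma gaussianReal_QP_zero {σ : ℝ} (hσ : 0 < σ) (k : ℕ) (hk : k ≠ 0) :
    ∫ z, QP (σ^2) k (Complex.I*σ*z) ∂(gaussianReal 0 1) = 0 := by
  rw [integral_gaussianReal_eq one_ne_zero]
  have he : ∀ z : ℝ, (gaussianPDFReal 0 1 z) • (QP (σ^2) k (Complex.I*σ*z))
      = ((√(2*π*(1:ℝ≥0)) : ℝ)⁻¹ : ℂ)
        * (QP (σ^2) k (Complex.I*σ*z) * ((rexp (-z^2/(2*(1:ℝ))) : ℝ) : ℂ)) := by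
    intro z
    have := gaussianPDFReal_smul 1 z (QP (σ^2) k (Complex.I*σ*z))
    simpa using this
  rw [funext he, integral_const_mul]
  rw [outer_zero hσ k hk, mul_zero]

lemma integrable_poly_gaussianReal {v : ℝ≥0} (hv : 0 < (v:ℝ)) (n : ℕ) :
    Integrable (fun x : ℝ => (1+|x|)^n) (gaussianReal 0 v) := by
  have hne : v ≠ 0 := by intro h; rw [h] at hv; simp at hv
  rw [gaussianReal_of_var_ne_zero _ hne]
  rw [show gaussianPDF 0 v = fun x => ((Real.toNNReal (gaussianPDFReal 0 v x)) : ℝ≥0∞) from rfl]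
  rw [integrable_withDensity_iff_integrable_smul ((measurable_gaussianPDFReal 0 v).real_toNNReal)]
  have he : ∀ x : ℝ, (Real.toNNReal (gaussianPDFReal 0 v x)) • ((1+|x|)^n : ℝ)
      = (√(2*π*v) : ℝ)⁻¹ * ((1+|x|)^n * rexp (-x^2/(2*(v:ℝ)))) := by
    intro x
    rw [NNReal.smul_def, Real.coe_toNNReal _ (gaussianPDFReal_nonneg 0 v x), gaussianPDFReal]
    simp only [sub_zero, smul_eq_mul]
    ring
  rw [funext he]
  exact (integrable_onePlusAbs_gauss hv n).const_mul _

lemma moment_prod {σ : ℝ} (hσ : 0 < σ) (k : ℕ) (hk : k ≠ 0) :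
    ∫ p : ℝ × ℝ, ((p.1:ℂ) + Complex.I*σ*p.2)^k
      ∂((gaussianReal 0 ((σ^2).toNNReal)).prod (gaussianReal 0 1)) = 0 := by
  have hv : (((σ^2).toNNReal : ℝ≥0) : ℝ) = σ^2 := Real.coe_toNNReal _ (sq_nonneg σ)
  have hvpos : 0 < (((σ^2).toNNReal : ℝ≥0) : ℝ) := by rw [hv]; positivity
  have hcont : Continuous fun p : ℝ × ℝ => ((p.1:ℂ) + Complex.I*σ*p.2)^k :=
    (((Complex.continuous_ofReal.comp continuous_fst).add
      (continuous_const.mul (Complex.continuous_ofReal.comp continuous_snd))).pow k)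
  have hint : Integrable (fun p : ℝ × ℝ => ((p.1:ℂ) + Complex.I*σ*p.2)^k)
      ((gaussianReal 0 ((σ^2).toNNReal)).prod (gaussianReal 0 1)) := by
    have hB : Integrable (fun p : ℝ × ℝ => ((1+σ)^k * (1+|p.1|)^k) * (1+|p.2|)^k)
        ((gaussianReal 0 ((σ^2).toNNReal)).prod (gaussianReal 0 1)) :=
      ((integrable_poly_gaussianReal hvpos k).const_mul ((1+σ)^k)).mul_prod
        (integrable_poly_gaussianReal (by norm_num) k)
    refine hB.mono' hcont.aestronglyMeasurable (Filter.Eventually.of_forall fun p => ?_)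
    rw [norm_pow]
    calc ‖(p.1:ℂ) + Complex.I*σ*p.2‖^k ≤ ((1+σ) * (1+|p.1|) * (1+|p.2|))^k := by
          refine pow_le_pow_left₀ (norm_nonneg _) ?_ k
          have h1 : ‖(p.1:ℂ) + Complex.I*σ*p.2‖ ≤ |p.1| + σ * |p.2| := by
            refine (norm_add_le _ _).trans ?_
            rw [Complex.norm_real, Real.norm_eq_abs, norm_mul, norm_mul, Complex.norm_I,
              one_mul, Complex.norm_real, Complex.norm_real, Real.norm_eq_abs,
              Real.norm_eq_abs, abs_of_pos hσ]
          refine h1.trans ?_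
          nlinarith [abs_nonneg p.1, abs_nonneg p.2, hσ.le,
            mul_nonneg (abs_nonneg p.1) (abs_nonneg p.2)]
      _ = ((1+σ)^k * (1+|p.1|)^k) * (1+|p.2|)^k := by rw [← mul_pow, ← mul_pow]
  rw [integral_prod_symm _ hint]
  have hinner : ∀ z : ℝ, (∫ u : ℝ, ((u:ℂ) + Complex.I*σ*z)^k ∂(gaussianReal 0 ((σ^2).toNNReal)))
      = QP (σ^2) k (Complex.I*σ*z) := by
    intro z
    have := gaussianReal_shift_moment hvpos k (Complex.I*σ*z)
    rwa [hv] at this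
  simp only [hinner]
  exact gaussianReal_QP_zero hσ k hk

lemma summable_taylor {g : ℂ → ℂ} (hg : Differentiable ℂ g) (x : ℂ) {r : ℝ} (hr : 0 ≤ r) :
    Summable (fun k : ℕ => ‖iteratedDeriv k g x‖ / (Nat.factorial k : ℝ) * r ^ k) := by
  have h := hg.hasFPowerSeriesOnBall x (R := 1) one_pos
  set p := cauchyPowerSeries g x ((1:ℝ≥0):ℝ) with hp
  have hrad : (r.toNNReal : ℝ≥0∞) < p.radius := by
    have : p.radius = ⊤ := top_le_iff.mp h.r_le
    rw [this]; exact ENNReal.coe_lt_top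
  have hs := p.summable_norm_mul_pow hrad
  rw [Real.coe_toNNReal r hr] at hs
  refine hs.congr (fun n => ?_)
  have h1 := h.factorial_smul (y := (1:ℂ)) n
  have h2 : iteratedDeriv n g x = iteratedFDeriv ℂ n g x (fun _ => 1) :=
    iteratedDeriv_eq_iteratedFDeriv
  have key : ‖p n‖ = ‖iteratedDeriv n g x‖ / (n.factorial : ℝ) := by
    rw [h2, ← h1, FormalMultilinearSeries.norm_apply_eq_norm_coef]
    have : (n.factorial) • p n (fun _ => (1:ℂ)) = (n.factorial : ℂ) * p n (fun _ => (1:ℂ)) :=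
      nsmul_eq_mul _ _
    rw [this, norm_mul, Complex.norm_natCast]
    have hne : (n.factorial : ℝ) ≠ 0 := Nat.cast_ne_zero.mpr n.factorial_ne_zero
    rw [show FormalMultilinearSeries.coeff p n = p n (fun _ => (1:ℂ)) from rfl]
    field_simp
  rw [key]


end EntireUnbiasedAux

open EntireUnbiasedAux

/-- Let `g : ℂ → ℂ` be entire, `x ∈ ℝ`, `σ > 0`, and `U ~ N(0, σ²)`, `Z ~ N(0, 1)` independent.
If `E[ ∑_k |g^{(k)}(x)|/k! ⬝ |U + iσZ|^k ] < ∞`, then `E[g(x + U + iσZ)] = g(x)`. -/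
theorem expectation_entire_complex_error_eq
    {Ω : Type*} [MeasurableSpace Ω] (μ : Measure Ω) [IsProbabilityMeasure μ]
    (g : ℂ → ℂ) (hg : Differentiable ℂ g)
    (x σ : ℝ) (hσ : 0 < σ)
    (U Z : Ω → ℝ) (hU : Measurable U) (hZ : Measurable Z)
    (hUlaw : μ.map U = gaussianReal 0 ((σ ^ 2).toNNReal))
    (hZlaw : μ.map Z = gaussianReal 0 1)
    (hindep : IndepFun U Z μ)
    (hdom : Integrable (fun ω =>
      ∑' k : ℕ, ‖iteratedDeriv k g (x : ℂ)‖ / (Nat.factorial k : ℝ) *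
        ‖(U ω : ℂ) + Complex.I * σ * Z ω‖ ^ k) μ) :
    ∫ ω, g ((x : ℂ) + U ω + Complex.I * σ * Z ω) ∂μ = g (x : ℂ) := by
  set W : Ω → ℂ := fun ω => (U ω : ℂ) + Complex.I * σ * Z ω with hW
  have hWm : Measurable W :=
    (Complex.measurable_ofReal.comp hU).add
      ((Complex.measurable_ofReal.comp hZ).const_mul _)
  have hmap : μ.map (fun ω => (U ω, Z ω))
      = (gaussianReal 0 ((σ^2).toNNReal)).prod (gaussianReal 0 1) := by
    rw [← hUlaw, ← hZlaw]
    exact (indepFun_iff_map_prod_eq_prod_map_map hU.aemeasurable hZ.aemeasurable).mp hindep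
  have hmom : ∀ k : ℕ, k ≠ 0 → ∫ ω, W ω ^ k ∂μ = 0 := by
    intro k hk
    have hco : Continuous fun p : ℝ × ℝ => ((p.1:ℂ) + Complex.I*σ*p.2)^k :=
      (((Complex.continuous_ofReal.comp continuous_fst).add
        (continuous_const.mul (Complex.continuous_ofReal.comp continuous_snd))).pow k)
    have hμm : AEMeasurable (fun ω => (U ω, Z ω)) μ := (hU.prodMk hZ).aemeasurable
    calc ∫ ω, W ω ^ k ∂μ
        = ∫ q : ℝ × ℝ, ((q.1:ℂ) + Complex.I*σ*q.2)^k ∂(μ.map (fun ω => (U ω, Z ω))) := by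
          rw [integral_map hμm hco.aestronglyMeasurable]
      _ = 0 := by rw [hmap]; exact moment_prod hσ k hk
  have htay : ∀ ω, g ((x:ℂ) + U ω + Complex.I*σ*Z ω)
      = ∑' k : ℕ, (k.factorial : ℂ)⁻¹ * iteratedDeriv k g (x:ℂ) * W ω ^ k := by
    intro ω
    have ht := Complex.taylorSeries_eq_of_entire' (c := (x:ℂ)) (z := (x:ℂ) + W ω) hg
    simp only [add_sub_cancel_left] at ht
    rw [show (x:ℂ) + (U ω : ℂ) + Complex.I*σ*Z ω = (x:ℂ) + W ω by simp only [hW]; ring]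
    exact ht.symm
  have hnorm : ∀ (k : ℕ) (ω : Ω), (‖(k.factorial : ℂ)⁻¹ * iteratedDeriv k g (x:ℂ) * W ω ^ k‖₊ : ℝ≥0∞)
      = ENNReal.ofReal (‖iteratedDeriv k g (x:ℂ)‖ / (k.factorial : ℝ) * ‖W ω‖ ^ k) := by
    intro k ω
    rw [← ENNReal.ofReal_coe_nnreal, coe_nnnorm]
    congr 1
    rw [norm_mul, norm_mul, norm_inv, norm_pow, Complex.norm_natCast]
    ring
  have hsummable : ∀ ω : Ω, Summable (fun k : ℕ =>
      ‖iteratedDeriv k g (x:ℂ)‖ / (k.factorial : ℝ) * ‖W ω‖ ^ k) :=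
    fun ω => summable_taylor hg (x:ℂ) (norm_nonneg (W ω))
  have hswap : ∫ ω, (∑' k : ℕ, (k.factorial : ℂ)⁻¹ * iteratedDeriv k g (x:ℂ) * W ω ^ k) ∂μ
      = ∑' k : ℕ, ∫ ω, (k.factorial : ℂ)⁻¹ * iteratedDeriv k g (x:ℂ) * W ω ^ k ∂μ := by
    refine integral_tsum (fun k => ((hWm.pow_const k).const_mul _).aestronglyMeasurable) ?_
    refine ne_of_lt ?_
    have hmeas : ∀ k : ℕ, AEMeasurable (fun ω =>
        ENNReal.ofReal (‖iteratedDeriv k g (x:ℂ)‖ / (k.factorial : ℝ) * ‖W ω‖ ^ k)) μ := by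
      intro k
      exact (measurable_const.mul ((hWm.norm).pow_const k)).ennreal_ofReal.aemeasurable
    calc ∑' k : ℕ, ∫⁻ ω, (‖(k.factorial : ℂ)⁻¹ * iteratedDeriv k g (x:ℂ) * W ω ^ k‖₊ : ℝ≥0∞) ∂μ
        = ∑' k : ℕ, ∫⁻ ω, ENNReal.ofReal
            (‖iteratedDeriv k g (x:ℂ)‖ / (k.factorial : ℝ) * ‖W ω‖ ^ k) ∂μ := by
          congr 1; funext k
          exact lintegral_congr (fun ω => hnorm k ω)
      _ = ∫⁻ ω, ∑' k : ℕ, ENNReal.ofReal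
            (‖iteratedDeriv k g (x:ℂ)‖ / (k.factorial : ℝ) * ‖W ω‖ ^ k) ∂μ :=
          (lintegral_tsum hmeas).symm
      _ = ∫⁻ ω, ENNReal.ofReal (∑' k : ℕ,
            ‖iteratedDeriv k g (x:ℂ)‖ / (k.factorial : ℝ) * ‖W ω‖ ^ k) ∂μ := by
          refine lintegral_congr (fun ω => ?_)
          rw [ENNReal.ofReal_tsum_of_nonneg (fun k => by positivity) (hsummable ω)]
      _ < ⊤ := by
          have hfin := hdom.2
          rw [hasFiniteIntegral_iff_norm] at hfin
          refine lt_of_le_of_lt (lintegral_mono (fun ω => ?_)) hfin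
          exact ENNReal.ofReal_le_ofReal (le_abs_self _)
  calc ∫ ω, g ((x:ℂ) + U ω + Complex.I*σ*Z ω) ∂μ
      = ∫ ω, (∑' k : ℕ, (k.factorial : ℂ)⁻¹ * iteratedDeriv k g (x:ℂ) * W ω ^ k) ∂μ := by
        exact integral_congr_ae (Filter.Eventually.of_forall htay)
    _ = ∑' k : ℕ, ∫ ω, (k.factorial : ℂ)⁻¹ * iteratedDeriv k g (x:ℂ) * W ω ^ k ∂μ := hswap
    _ = g (x:ℂ) := by
        rw [tsum_eq_single 0 ?_]
        · simp
        · intro k hk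
          rw [integral_const_mul, hmom k hk, mul_zero]

end
end

section
/- Let U be a real random variable that is ordinary smooth of order β > 1 with constant c > 0, with even, nowhere-vanishing characteristic function φ_U. Let ℓ ∈ ℕ₀ and let φ_K be ℓ-times differentiable with ‖φ_K^{(ℓ)}‖_∞ < ∞ and ∫ |t|^β |φ_K^{(ℓ)}(t)| dt < ∞. Then for each fixed x ∈ ℝ, lim_{h→0⁺} h^β K_{U,ℓ}(x) = (i^{−ℓ}/(2πc)) ∫ e^{−itx} |t|^β φ_K^{(ℓ)}(t) dt. -/
open MeasureTheory Filter Topology Complex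

/-- Asymptotics of the deconvoluting kernel for ordinary smooth errors (Lemma B.3 of
Delaigle et al.).  If `U` is ordinary smooth of order `β > 1` with constant `c > 0`, with
even nowhere-vanishing characteristic function `φ_U`, and `φ_K` is `ℓ`-times differentiable
with bounded `ℓ`-th derivative satisfying `∫ |t|^β |φ_K^{(ℓ)}(t)| dt < ∞`, then for each
fixed `x`, `h^β K_{U,ℓ}(x) → (i^{−ℓ}/(2πc)) ∫ e^{−itx} |t|^β φ_K^{(ℓ)}(t) dt` as `h → 0⁺`. -/
theorem deconvoluting_kernel_ordinary_smooth_limit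
    {Ω : Type*} [MeasurableSpace Ω] (μ : Measure Ω) [IsProbabilityMeasure μ]
    (U : Ω → ℝ) (hU : Measurable U)
    (φU : ℝ → ℂ)
    (hφU : ∀ t : ℝ, φU t = ∫ ω, Complex.exp (Complex.I * t * U ω) ∂μ)
    (β c : ℝ) (hβ : 1 < β) (hc : 0 < c)
    (hord1 : Tendsto (fun t : ℝ => ((t ^ β : ℝ) : ℂ) * φU t) atTop (𝓝 (c : ℂ)))
    (hord2 : Tendsto (fun t : ℝ => ((t ^ (β + 1) : ℝ) : ℂ) * deriv φU t) atTop
      (𝓝 (-(c * β) : ℂ)))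
    (hφU_even : ∀ t, φU (-t) = φU t) (hφU_ne : ∀ t, φU t ≠ 0)
    (ℓ : ℕ) (φK : ℝ → ℂ) (hφK_diff : ContDiff ℝ (ℓ : ℕ∞) φK)
    (hφK_bdd : ∃ C : ℝ, ∀ t, ‖iteratedDeriv ℓ φK t‖ ≤ C)
    (hφK_int : Integrable (fun t : ℝ => |t| ^ β * ‖iteratedDeriv ℓ φK t‖))
    (KUl : ℝ → ℝ → ℂ)
    (hKUl : ∀ (h : ℝ) (y : ℝ), KUl h y
      = Complex.I ^ (-(ℓ : ℤ)) * (1 / (2 * Real.pi)) *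
          ∫ t : ℝ, Complex.exp (-(Complex.I * t * y)) *
            (iteratedDeriv ℓ φK t / φU (-t / h)))
    (x : ℝ) :
    Tendsto (fun h : ℝ => ((h ^ β : ℝ) : ℂ) * KUl h x) (𝓝[>] (0 : ℝ))
      (𝓝 (Complex.I ^ (-(ℓ : ℤ)) / (2 * Real.pi * c) *
        ∫ t : ℝ, Complex.exp (-(Complex.I * t * x)) * ((|t| ^ β : ℝ) : ℂ) *
          iteratedDeriv ℓ φK t)) := by
  have hπ : (Real.pi : ℂ) ≠ 0 := by exact_mod_cast Real.pi_ne_zero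
  have hcC : (c : ℂ) ≠ 0 := by exact_mod_cast hc.ne'
  -- continuity of φU
  have hcont : Continuous φU := by
    have h1 : Continuous fun t : ℝ => ∫ ω, Complex.exp (Complex.I * t * U ω) ∂μ := by
      apply continuous_of_dominated (bound := fun _ => (1:ℝ))
      · intro t
        exact (Complex.measurable_exp.comp
          (measurable_const.mul (Complex.measurable_ofReal.comp hU))).aestronglyMeasurable
      · intro t
        filter_upwards with ω
        simp [Complex.norm_exp, Complex.mul_re, Complex.mul_im]
      · exact integrable_const 1
      · filter_upwards with ω
        fun_prop
    have h2 : φU = fun t : ℝ => ∫ ω, Complex.exp (Complex.I * t * U ω) ∂μ := funext hφU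
    rw [h2]; exact h1
  have hKcont : Continuous (iteratedDeriv ℓ φK) :=
    hφK_diff.continuous_iteratedDeriv ℓ (by exact_mod_cast le_rfl)
  have hE : ∀ t : ℝ, ‖Complex.exp (-(Complex.I * t * x))‖ = 1 := by
    intro t
    simp [Complex.norm_exp, Complex.mul_re, Complex.mul_im]
  -- evenness reformulated
  have habs : ∀ s : ℝ, φU s = φU |s| := by
    intro s
    rcases le_or_gt 0 s with h | h
    · rw [_root_.abs_of_nonneg h]
    · rw [_root_.abs_of_neg h]; exact (hφU_even s).symm
  have heven : ∀ (t h : ℝ), 0 < h → φU (-t / h) = φU (|t| / h) := by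
    intro t h hh
    rw [habs (-t / h)]
    congr 1
    rw [abs_div, abs_neg, _root_.abs_of_pos hh]
  -- threshold T₁
  have hnorm : Tendsto (fun s : ℝ => ‖((s ^ β : ℝ) : ℂ) * φU s‖) atTop (𝓝 c) := by
    have := hord1.norm
    simpa [Complex.norm_real, _root_.abs_of_pos hc] using this
  obtain ⟨T, hT⟩ := eventually_atTop.1 (hnorm.eventually_const_le (by linarith : c / 2 < c))
  set T₁ : ℝ := max T 1 with hT₁def
  have hT₁1 : (1:ℝ) ≤ T₁ := le_max_right _ _
  have hT₁0 : (0:ℝ) ≤ T₁ := by linarith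
  have hT₁ : ∀ s : ℝ, T₁ ≤ s → c / 2 ≤ s ^ β * ‖φU s‖ := by
    intro s hs
    have h1 := hT s (le_trans (le_max_left _ _) hs)
    have hs0 : 0 ≤ s := le_trans hT₁0 hs
    rwa [norm_mul, Complex.norm_real, Real.norm_eq_abs,
      _root_.abs_of_nonneg (Real.rpow_nonneg hs0 β)] at h1
  -- minimum of ‖φU‖ on [0, T₁]
  obtain ⟨s₀, hs₀mem, hmin⟩ := (isCompact_Icc (a := (0:ℝ)) (b := T₁)).exists_isMinOn
    (Set.nonempty_Icc.2 hT₁0) hcont.norm.continuousOn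
  set m : ℝ := ‖φU s₀‖ with hmdef
  have hm0 : 0 < m := norm_pos_iff.2 (hφU_ne s₀)
  have hmle : ∀ s ∈ Set.Icc (0:ℝ) T₁, m ≤ ‖φU s‖ := fun s hs => isMinOn_iff.1 hmin s hs
  obtain ⟨C, hC⟩ := hφK_bdd
  have hC0 : 0 ≤ C := le_trans (norm_nonneg _) (hC 0)
  -- the dominating function
  set bound : ℝ → ℝ := fun t => (2 / c) * (|t| ^ β * ‖iteratedDeriv ℓ φK t‖)
      + Set.indicator (Set.Icc (-T₁) T₁) (fun _ => C / m) t with hbdef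
  have hbound_int : Integrable bound := by
    refine (hφK_int.const_mul _).add ?_
    exact ((integrableOn_const measure_Icc_lt_top.ne).integrable_indicator
      measurableSet_Icc)
  -- dominated convergence
  have key : Tendsto (fun h : ℝ => ∫ t : ℝ, ((h ^ β : ℝ) : ℂ) *
      (Complex.exp (-(Complex.I * t * x)) * (iteratedDeriv ℓ φK t / φU (-t / h))))
      (𝓝[>] (0:ℝ))
      (𝓝 (∫ t : ℝ, (Complex.exp (-(Complex.I * t * x)) * ((|t| ^ β : ℝ) : ℂ) *
        iteratedDeriv ℓ φK t) / (c : ℂ))) := by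
    apply tendsto_integral_filter_of_dominated_convergence bound
    · filter_upwards with h
      have c1 : Continuous fun t : ℝ => Complex.exp (-(Complex.I * t * x)) := by fun_prop
      have c2 : Continuous fun t : ℝ => φU (-t / h) := hcont.comp (by fun_prop)
      exact (continuous_const.mul (c1.mul (hKcont.div c2 fun t => hφU_ne _))).aestronglyMeasurable
    · filter_upwards [Ioo_mem_nhdsGT (zero_lt_one (α := ℝ))] with h hh
      refine ae_of_all _ fun t => ?_
      have hh0 : 0 < h := hh.1
      have hnorm_eq : ‖((h ^ β : ℝ) : ℂ) * (Complex.exp (-(Complex.I * t * x)) *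
          (iteratedDeriv ℓ φK t / φU (-t / h)))‖
          = h ^ β * (‖iteratedDeriv ℓ φK t‖ / ‖φU (|t| / h)‖) := by
        rw [norm_mul, norm_mul, norm_div, hE t, heven t h hh0, Complex.norm_real,
          Real.norm_eq_abs, _root_.abs_of_nonneg (Real.rpow_nonneg hh0.le β), one_mul]
      rw [hnorm_eq]
      set s : ℝ := |t| / h with hsdef
      have hs0 : 0 ≤ s := div_nonneg (abs_nonneg t) hh0.le
      have hφUs : 0 < ‖φU s‖ := norm_pos_iff.2 (hφU_ne s)
      have hts : |t| = h * s := by rw [hsdef, mul_div_assoc', mul_div_cancel_left₀ _ hh0.ne']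
      rcases le_or_gt T₁ s with hcase | hcase
      · -- tail region
        have hkey := hT₁ s hcase
        have hind : 0 ≤ Set.indicator (Set.Icc (-T₁) T₁) (fun _ => C / m) t :=
          Set.indicator_nonneg (fun _ _ => div_nonneg hC0 hm0.le) t
        have h1 : h ^ β * (‖iteratedDeriv ℓ φK t‖ / ‖φU s‖)
            ≤ (2 / c) * (|t| ^ β * ‖iteratedDeriv ℓ φK t‖) := by
          have hab : |t| ^ β = h ^ β * s ^ β := by
            rw [hts, Real.mul_rpow hh0.le hs0]
          have hhb : 0 ≤ h ^ β := Real.rpow_nonneg hh0.le β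
          have hK0 : 0 ≤ ‖iteratedDeriv ℓ φK t‖ := norm_nonneg _
          have h3 : 1 / ‖φU s‖ ≤ 2 * s ^ β / c := by
            rw [div_le_div_iff₀ hφUs hc]
            nlinarith [hkey]
          calc h ^ β * (‖iteratedDeriv ℓ φK t‖ / ‖φU s‖)
              = h ^ β * ‖iteratedDeriv ℓ φK t‖ * (1 / ‖φU s‖) := by ring
            _ ≤ h ^ β * ‖iteratedDeriv ℓ φK t‖ * (2 * s ^ β / c) := by
                apply mul_le_mul_of_nonneg_left h3 (by positivity)
            _ = 2 / c * (h ^ β * s ^ β * ‖iteratedDeriv ℓ φK t‖) := by ring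
            _ = 2 / c * (|t| ^ β * ‖iteratedDeriv ℓ φK t‖) := by rw [hab]
        exact le_trans h1 (le_add_of_nonneg_right hind)
      · -- central region
        have hsmem : s ∈ Set.Icc (0:ℝ) T₁ := ⟨hs0, hcase.le⟩
        have htmem : t ∈ Set.Icc (-T₁) T₁ := by
          have : |t| ≤ T₁ := by
            rw [hts]
            calc h * s ≤ 1 * T₁ := by
                  apply mul_le_mul hh.2.le hcase.le hs0 zero_le_one
              _ = T₁ := one_mul _
          exact abs_le.1 this
        have hind : Set.indicator (Set.Icc (-T₁) T₁) (fun _ => C / m) t = C / m :=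
          Set.indicator_of_mem htmem _
        have h1 : h ^ β * (‖iteratedDeriv ℓ φK t‖ / ‖φU s‖) ≤ 1 * (C / m) := by
          apply mul_le_mul
          · exact Real.rpow_le_one hh0.le hh.2.le (by linarith)
          · exact div_le_div₀ hC0 (hC t) hm0 (hmle s hsmem)
          · positivity
          · exact zero_le_one
        have h2 : 0 ≤ (2 / c) * (|t| ^ β * ‖iteratedDeriv ℓ φK t‖) := by positivity
        show _ ≤ 2 / c * (|t| ^ β * ‖iteratedDeriv ℓ φK t‖)
            + Set.indicator (Set.Icc (-T₁) T₁) (fun _ => C / m) t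
        rw [hind]
        linarith [h1]
    · exact hbound_int
    · refine ae_of_all _ fun t => ?_
      by_cases ht : t = 0
      · subst ht
        have hz : Tendsto (fun h : ℝ => ((h ^ β : ℝ) : ℂ)) (𝓝[>] (0:ℝ)) (𝓝 0) := by
          have h1 : Tendsto (fun h : ℝ => h ^ β) (𝓝 (0:ℝ)) (𝓝 ((0:ℝ) ^ β)) :=
            (Real.continuousAt_rpow_const 0 β (Or.inr (by linarith))).tendsto
          rw [Real.zero_rpow (by linarith : β ≠ 0)] at h1
          have h2 : Tendsto (fun h : ℝ => h ^ β) (𝓝[>] (0:ℝ)) (𝓝 0) :=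
            h1.mono_left nhdsWithin_le_nhds
          have := (Complex.continuous_ofReal.tendsto 0).comp h2
          simpa [Function.comp_def] using this
        simp only [Complex.ofReal_zero, mul_zero, zero_mul, neg_zero, zero_div, abs_zero,
          Real.zero_rpow (show β ≠ 0 by linarith), Complex.exp_zero, one_mul]
        simpa using hz.mul_const (iteratedDeriv ℓ φK 0 / φU 0)
      · have ht0 : 0 < |t| := abs_pos.2 ht
        have hs_to : Tendsto (fun h : ℝ => |t| / h) (𝓝[>] (0:ℝ)) atTop := by
          have := (tendsto_inv_nhdsGT_zero (𝕜 := ℝ)).const_mul_atTop ht0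
          simpa [div_eq_mul_inv] using this
        have hG : Tendsto (fun s : ℝ => ((|t| ^ β : ℝ) : ℂ) / (((s ^ β : ℝ) : ℂ) * φU s))
            atTop (𝓝 (((|t| ^ β : ℝ) : ℂ) / (c : ℂ))) :=
          tendsto_const_nhds.div hord1 hcC
        have hq : Tendsto (fun h : ℝ => ((h ^ β : ℝ) : ℂ) / φU (-t / h)) (𝓝[>] (0:ℝ))
            (𝓝 (((|t| ^ β : ℝ) : ℂ) / (c : ℂ))) := by
          refine (hG.comp hs_to).congr' ?_
          filter_upwards [self_mem_nhdsWithin] with h hh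
          have hh0 : 0 < h := hh
          have hss : 0 < |t| / h := div_pos ht0 hh0
          rw [heven t h hh0]
          have hr : |t| ^ β = h ^ β * (|t| / h) ^ β := by
            rw [← Real.mul_rpow hh0.le hss.le]
            congr 1
            field_simp
          have hrC : ((|t| ^ β : ℝ) : ℂ) = (((|t| / h) ^ β : ℝ) : ℂ) * ((h ^ β : ℝ) : ℂ) := by
            rw [← Complex.ofReal_mul]
            exact_mod_cast (by rw [hr]; ring)
          have ha : (((|t| / h) ^ β : ℝ) : ℂ) ≠ 0 := by
            exact_mod_cast (Real.rpow_pos_of_pos hss β).ne'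
          simp only [Function.comp]
          rw [hrC, mul_div_mul_left _ _ ha]
        have hfin : Tendsto (fun h : ℝ => ((h ^ β : ℝ) : ℂ) *
            (Complex.exp (-(Complex.I * t * x)) * (iteratedDeriv ℓ φK t / φU (-t / h))))
            (𝓝[>] (0:ℝ))
            (𝓝 ((Complex.exp (-(Complex.I * t * x)) * iteratedDeriv ℓ φK t) *
              (((|t| ^ β : ℝ) : ℂ) / (c : ℂ)))) := by
          refine (tendsto_const_nhds.mul hq).congr fun h => by ring
        have heq : (Complex.exp (-(Complex.I * t * x)) * iteratedDeriv ℓ φK t) *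
            (((|t| ^ β : ℝ) : ℂ) / (c : ℂ))
            = (Complex.exp (-(Complex.I * t * x)) * ((|t| ^ β : ℝ) : ℂ) *
              iteratedDeriv ℓ φK t) / (c : ℂ) := by ring
        exact heq ▸ hfin
  -- assemble
  have hrw : ∀ h : ℝ, ((h ^ β : ℝ) : ℂ) * KUl h x
      = Complex.I ^ (-(ℓ : ℤ)) * (1 / (2 * Real.pi)) *
        ∫ t : ℝ, ((h ^ β : ℝ) : ℂ) * (Complex.exp (-(Complex.I * t * x)) *
          (iteratedDeriv ℓ φK t / φU (-t / h))) := by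
    intro h
    rw [hKUl h x, MeasureTheory.integral_const_mul]
    ring
  have hmain := key.const_mul (Complex.I ^ (-(ℓ : ℤ)) * (1 / (2 * Real.pi)))
  have hfinal : Complex.I ^ (-(ℓ : ℤ)) * (1 / (2 * Real.pi)) *
      ∫ t : ℝ, (Complex.exp (-(Complex.I * t * x)) * ((|t| ^ β : ℝ) : ℂ) *
        iteratedDeriv ℓ φK t) / (c : ℂ)
      = Complex.I ^ (-(ℓ : ℤ)) / (2 * Real.pi * c) *
        ∫ t : ℝ, Complex.exp (-(Complex.I * t * x)) * ((|t| ^ β : ℝ) : ℂ) *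
          iteratedDeriv ℓ φK t := by
    rw [MeasureTheory.integral_div]
    field_simp
    try ring
    try exact Or.inl trivial
    congr 1
    funext a
    ring
  rw [← hfinal]
  exact Tendsto.congr (fun h => (hrw h).symm) hmain
end

section
/- Let (A_n, B_n) be a sequence of ℝ²-valued random vectors, (μ_A, μ_B) ∈ ℝ² with μ_A² + μ_B² ≠ 0 and not (μ_A = 0 and μ_B ≤ 0) (so atan2 is differentiable at (μ_A, μ_B)), and let (d_n) be a positive non-random sequence with d_n → ∞. Suppose d_n·(A_n − μ_A, B_n − μ_B) converges in distribution to the centered bivariate Gaussian distribution N(0, Σ), where Σ is a 2×2 covariance matrix. Then d_n·(atan2(A_n, B_n) − atan2(μ_A, μ_B)) converges in distribution to the centered real Gaussian N(0, v) with variance v = (μ_A² Σ₂₂ + μ_B² Σ₁₁ − 2 μ_A μ_B Σ₁₂) / (μ_A² + μ_B²)². -/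
open MeasureTheory ProbabilityTheory Filter Topology Complex BoundedContinuousFunction

/-- A probability measure `ν` on `ℝ²` is the centered bivariate Gaussian with covariance
matrix `S` iff every linear functional pushes it forward to the corresponding centered real
Gaussian. -/
def IsCenteredGaussianPair (ν : Measure (ℝ × ℝ)) (S : Matrix (Fin 2) (Fin 2) ℝ) : Prop :=
  IsProbabilityMeasure ν ∧
    ∀ a b : ℝ, ν.map (fun p => a * p.1 + b * p.2)
      = gaussianReal 0 ((a ^ 2 * S 0 0 + 2 * a * b * S 0 1 + b ^ 2 * S 1 1).toNNReal)

noncomputable def clampBCF (R : ℝ) : (ℝ × ℝ) →ᵇ ℝ :=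
  BoundedContinuousFunction.mkOfBound
    ⟨fun p => min 1 (max 0 (‖p‖ - R)), by fun_prop⟩ 1 (by
      intro x y
      have h1 : ∀ z : ℝ × ℝ, 0 ≤ min 1 (max 0 (‖z‖ - R)) := fun z =>
        le_min zero_le_one (le_max_left _ _)
      have h2 : ∀ z : ℝ × ℝ, min 1 (max 0 (‖z‖ - R)) ≤ 1 := fun z => min_le_left _ _
      rw [Real.dist_eq, abs_sub_le_iff]
      constructor <;> simp only [ContinuousMap.coe_mk] <;> linarith [h1 x, h2 x, h1 y, h2 y])

lemma clampBCF_apply (R : ℝ) (p : ℝ × ℝ) : clampBCF R p = min 1 (max 0 (‖p‖ - R)) := rfl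

lemma clampBCF_nonneg (R : ℝ) (p : ℝ × ℝ) : 0 ≤ clampBCF R p :=
  le_min zero_le_one (le_max_left _ _)

lemma clampBCF_le_one (R : ℝ) (p : ℝ × ℝ) : clampBCF R p ≤ 1 := min_le_left _ _

lemma clampBCF_eq_zero {R : ℝ} {p : ℝ × ℝ} (h : ‖p‖ ≤ R) : clampBCF R p = 0 := by
  rw [clampBCF_apply, max_eq_left (sub_nonpos.mpr h), min_eq_right zero_le_one]

lemma clampBCF_eq_one {R : ℝ} {p : ℝ × ℝ} (h : R + 1 ≤ ‖p‖) : clampBCF R p = 1 := by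
  rw [clampBCF_apply, max_eq_right (by linarith), min_eq_left (by linarith)]

lemma bcf_integrable {α Ω : Type*} [MeasurableSpace Ω] [TopologicalSpace α]
    [MeasurableSpace α] [OpensMeasurableSpace α]
    {μ : Measure Ω} [IsProbabilityMeasure μ] (f : α →ᵇ ℝ) {h : Ω → α} (hh : Measurable h) :
    Integrable (fun ω => f (h ω)) μ :=
  ⟨(f.continuous.measurable.comp hh).aestronglyMeasurable,
    HasFiniteIntegral.of_bounded (C := ‖f‖) (ae_of_all _ fun _ => f.norm_coe_le_norm _)⟩

lemma clamp_tendsto_zero (ν : Measure (ℝ × ℝ)) [IsProbabilityMeasure ν] :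
    Tendsto (fun k : ℕ => ∫ p, clampBCF k p ∂ν) atTop (𝓝 0) := by
  have h0 : (0 : ℝ) = ∫ p, (0 : ℝ) ∂ν := by simp
  rw [h0]
  apply tendsto_integral_of_dominated_convergence (bound := fun _ => 1)
  · intro k
    exact ((clampBCF k).continuous.measurable.aestronglyMeasurable)
  · exact integrable_const 1
  · intro k
    refine ae_of_all _ fun p => ?_
    rw [Real.norm_eq_abs, _root_.abs_of_nonneg (clampBCF_nonneg _ _)]
    exact clampBCF_le_one _ _
  · refine ae_of_all _ fun p => ?_
    apply tendsto_const_nhds.congr'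
    filter_upwards [eventually_ge_atTop ⌈‖p‖⌉₊] with n hn
    exact (clampBCF_eq_zero ((Nat.le_ceil _).trans (by exact_mod_cast hn))).symm

set_option maxHeartbeats 1000000

/-- Delta method for atan2.  If `d_n (A_n − μ_A, B_n − μ_B)` converges in distribution to a
centered bivariate Gaussian `N(0, Σ)`, `d_n → ∞`, `μ_A² + μ_B² ≠ 0` and `(μ_B, μ_A)` is off
the closed negative real axis (so atan2 is differentiable at `(μ_A, μ_B)`), then
`d_n (atan2(A_n, B_n) − atan2(μ_A, μ_B))` converges in distribution to the centered real
Gaussian with variance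
`(μ_A² Σ₂₂ + μ_B² Σ₁₁ − 2 μ_A μ_B Σ₁₂)/(μ_A² + μ_B²)²`.  Here `atan2(y, x)` is realized as
the argument of the complex number `x + iy`, and convergence in distribution is expressed
by testing against bounded continuous functions. -/
theorem atan2_delta_method
    {Ω : Type*} [MeasurableSpace Ω] (μ : Measure Ω) [IsProbabilityMeasure μ]
    (A B : ℕ → Ω → ℝ) (hA : ∀ n, Measurable (A n)) (hB : ∀ n, Measurable (B n))
    (μA μB : ℝ) (hne : μA ^ 2 + μB ^ 2 ≠ 0) (haxis : ¬(μA = 0 ∧ μB ≤ 0))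
    (d : ℕ → ℝ) (hd_pos : ∀ n, 0 < d n) (hd_lim : Tendsto d atTop atTop)
    (S : Matrix (Fin 2) (Fin 2) ℝ) (hS : S.PosSemidef)
    (ν : Measure (ℝ × ℝ)) (hν : IsCenteredGaussianPair ν S)
    (hconv : ∀ f : (ℝ × ℝ) →ᵇ ℝ,
      Tendsto (fun n => ∫ ω, f (d n * (A n ω - μA), d n * (B n ω - μB)) ∂μ) atTop
        (𝓝 (∫ p, f p ∂ν))) :
    ∀ f : ℝ →ᵇ ℝ,
      Tendsto (fun n => ∫ ω,
          f (d n * (Complex.arg ((B n ω : ℂ) + (A n ω : ℂ) * Complex.I)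
              - Complex.arg ((μB : ℂ) + (μA : ℂ) * Complex.I))) ∂μ) atTop
        (𝓝 (∫ y, f y ∂(gaussianReal 0
          (((μA ^ 2 * S 1 1 + μB ^ 2 * S 0 0 - 2 * μA * μB * S 0 1) /
              (μA ^ 2 + μB ^ 2) ^ 2).toNNReal)))) := by
  intro f
  haveI : IsProbabilityMeasure ν := hν.1
  set r : ℝ := μA ^ 2 + μB ^ 2 with hr
  have hr0 : 0 < r := lt_of_le_of_ne (by positivity) (Ne.symm hne)
  set z₀ : ℂ := (μB : ℂ) + (μA : ℂ) * Complex.I with hz₀def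
  have hz0re : z₀.re = μB := by simp [hz₀def]
  have hz0im : z₀.im = μA := by simp [hz₀def]
  have hz0 : z₀ ∈ Complex.slitPlane := by
    rw [Complex.mem_slitPlane_iff, hz0re, hz0im]
    by_cases hA0 : μA = 0
    · left
      have hB0 : μB ≠ 0 := fun h => hne (by rw [hr, hA0, h]; ring)
      exact lt_of_le_of_ne (not_lt.mp fun h => haxis ⟨hA0, h.le⟩) (Ne.symm hB0)
    · right; exact hA0
  set g : ℝ × ℝ → ℝ := fun p => Complex.arg ((p.2 : ℂ) + (p.1 : ℂ) * Complex.I) with hgdef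
  set ℓ : ℝ × ℝ → ℝ := fun p => (μB * p.1 - μA * p.2) / r with hldef
  have hlcont : Continuous ℓ := by rw [hldef]; fun_prop
  have hlmeas : Measurable ℓ := hlcont.measurable
  -- derivative setup
  set T : (ℝ × ℝ) →L[ℝ] ℂ :=
    Complex.ofRealCLM.comp (ContinuousLinearMap.snd ℝ ℝ ℝ) +
      Complex.I • Complex.ofRealCLM.comp (ContinuousLinearMap.fst ℝ ℝ ℝ) with hTdef
  have hTapp : ∀ p : ℝ × ℝ, T p = (p.2 : ℂ) + (p.1 : ℂ) * Complex.I := by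
    intro p
    simp [hTdef, mul_comm]
  set Llog : ℂ →L[ℝ] ℂ := ((1 : ℂ →L[ℂ] ℂ).smulRight z₀⁻¹).restrictScalars ℝ with hLlogdef
  set L : (ℝ × ℝ) →L[ℝ] ℝ := Complex.imCLM.comp (Llog.comp T) with hLdef
  have hTz : T (μA, μB) = z₀ := by rw [hTapp]
  have hglog : HasFDerivAt g L (μA, μB) := by
    have h1 : HasFDerivAt Complex.log Llog z₀ :=
      ((Complex.hasDerivAt_log hz0).hasFDerivAt).restrictScalars ℝ
    have h1' : HasFDerivAt Complex.log Llog (T (μA, μB)) := hTz ▸ h1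
    have h2 := h1'.comp (μA, μB) T.hasFDerivAt
    have h3 := (Complex.imCLM.hasFDerivAt (x := Complex.log (T (μA, μB)))).comp (μA, μB) h2
    rw [← ContinuousLinearMap.comp_assoc] at h3
    refine h3.congr_of_eventuallyEq (Filter.Eventually.of_forall fun p => ?_)
    simp [hgdef, Function.comp, hTapp, Complex.log_im]
  have hLapp : ∀ p : ℝ × ℝ, L p = ℓ p := by
    intro p
    have hns : Complex.normSq z₀ = r := by
      rw [Complex.normSq_apply, hz0re, hz0im, hr]; ring
    have hLp : L p = ((T p) / z₀).im := by
      simp [hLdef, hLlogdef, div_eq_mul_inv, smul_eq_mul]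
    rw [hLp, Complex.div_im, hns, hTapp, hz0re, hz0im, hldef]
    simp
    ring
  -- pushforward identification
  have hmap : ν.map ℓ = gaussianReal 0
      (((μA ^ 2 * S 1 1 + μB ^ 2 * S 0 0 - 2 * μA * μB * S 0 1) / r ^ 2).toNNReal) := by
    have h := hν.2 (μB / r) (-(μA / r))
    have heq : (fun p : ℝ × ℝ => μB / r * p.1 + -(μA / r) * p.2) = ℓ := by
      funext p; simp only [hldef]; field_simp; ring
    rw [heq] at h
    have hvar : ((μB / r) ^ 2 * S 0 0 + 2 * (μB / r) * -(μA / r) * S 0 1 + (-(μA / r)) ^ 2 * S 1 1)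
        = (μA ^ 2 * S 1 1 + μB ^ 2 * S 0 0 - 2 * μA * μB * S 0 1) / r ^ 2 := by
      field_simp
      ring
    rw [hvar] at h
    exact h
  have hconst : (∫ y, f y ∂(gaussianReal 0
      (((μA ^ 2 * S 1 1 + μB ^ 2 * S 0 0 - 2 * μA * μB * S 0 1) / r ^ 2).toNNReal)))
      = ∫ p, f (ℓ p) ∂ν := by
    rw [← hmap, integral_map hlmeas.aemeasurable f.continuous.aestronglyMeasurable]
  rw [hconst]
  have hint_eq : ∀ n, (∫ ω,
      f (d n * (Complex.arg ((B n ω : ℂ) + (A n ω : ℂ) * Complex.I) - Complex.arg z₀)) ∂μ)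
      = ∫ ω, f (d n * (g (A n ω, B n ω) - g (μA, μB))) ∂μ := by
    intro n
    simp only [hgdef, hz₀def]
  refine Filter.Tendsto.congr (fun n => (hint_eq n).symm) ?_
  -- measurability
  have hYmeas : ∀ n, Measurable (fun ω => ((d n * (A n ω - μA), d n * (B n ω - μB)) : ℝ × ℝ)) :=
    fun n => (((hA n).sub measurable_const).const_mul _).prodMk
      (((hB n).sub measurable_const).const_mul _)
  have hgm : ∀ n, Measurable (fun ω => g (A n ω, B n ω)) := by
    intro n
    simp only [hgdef]
    exact Complex.measurable_arg.comp
      ((Complex.measurable_ofReal.comp (hB n)).add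
        ((Complex.measurable_ofReal.comp (hA n)).mul_const Complex.I))
  -- key uniform linearization estimate
  have hisO := hasFDerivAt_iff_isLittleO_nhds_zero.mp hglog
  have key : ∀ δ : ℝ, 0 < δ → ∀ R : ℝ, 0 < R → ∀ᶠ n in atTop, ∀ p : ℝ × ℝ, ‖p‖ ≤ R →
      |d n * (g ((μA, μB) + (d n)⁻¹ • p) - g (μA, μB)) - ℓ p| ≤ δ := by
    intro δ hδ R hR
    have hc : 0 < δ / R := div_pos hδ hR
    have h1 := hisO.def hc
    rw [Metric.eventually_nhds_iff] at h1
    obtain ⟨η, hη, hball⟩ := h1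
    filter_upwards [hd_lim.eventually_ge_atTop (2 * R / η)] with n hn p hp
    have hdn := hd_pos n
    have hdn' : d n ≠ 0 := ne_of_gt hdn
    have hRdn : R / d n < η := by
      rw [div_lt_iff₀ hdn]
      have h2 : η * (2 * R / η) ≤ η * d n := mul_le_mul_of_nonneg_left hn hη.le
      have h3 : η * (2 * R / η) = 2 * R := by field_simp
      linarith
    have hqn : ‖(d n)⁻¹ • p‖ ≤ R / d n := by
      rw [norm_smul, norm_inv, Real.norm_eq_abs, abs_of_pos hdn, div_eq_inv_mul]
      exact mul_le_mul_of_nonneg_left hp (inv_nonneg.mpr hdn.le)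
    have hqball : dist ((d n)⁻¹ • p) 0 < η := by
      rw [dist_zero_right]; exact lt_of_le_of_lt hqn hRdn
    have hb := hball hqball
    have hpq : p = d n • (d n)⁻¹ • p := by
      rw [smul_smul, mul_inv_cancel₀ hdn', one_smul]
    have hLq : ℓ p = d n * L ((d n)⁻¹ • p) := by
      rw [← hLapp p]
      nth_rewrite 1 [hpq]
      rw [L.map_smul, smul_eq_mul]
    have habs : |d n * (g ((μA, μB) + (d n)⁻¹ • p) - g (μA, μB)) - ℓ p|
        = d n * ‖g ((μA, μB) + (d n)⁻¹ • p) - g (μA, μB) - L ((d n)⁻¹ • p)‖ := by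
      rw [hLq, ← mul_sub, abs_mul, abs_of_pos hdn, Real.norm_eq_abs]
    rw [habs]
    calc d n * ‖g ((μA, μB) + (d n)⁻¹ • p) - g (μA, μB) - L ((d n)⁻¹ • p)‖
        ≤ d n * (δ / R * ‖(d n)⁻¹ • p‖) := mul_le_mul_of_nonneg_left hb hdn.le
      _ ≤ d n * (δ / R * (R / d n)) := by
          exact mul_le_mul_of_nonneg_left (mul_le_mul_of_nonneg_left hqn hc.le) hdn.le
      _ = δ := by field_simp
  -- recentering identity
  have harg : ∀ n ω, ((μA, μB) : ℝ × ℝ)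
      + (d n)⁻¹ • ((d n * (A n ω - μA), d n * (B n ω - μB)) : ℝ × ℝ) = (A n ω, B n ω) := by
    intro n ω
    have hdn' : d n ≠ 0 := (hd_pos n).ne'
    rw [Prod.smul_mk, Prod.mk_add_mk, Prod.mk.injEq]
    constructor <;> · rw [smul_eq_mul]; field_simp; ring
  -- epsilon argument
  rw [Metric.tendsto_nhds]
  intro ε hε
  set ε' : ℝ := ε / 5 with hε'def
  have hε' : 0 < ε' := by positivity
  have hfn : (0:ℝ) ≤ ‖f‖ := norm_nonneg f
  set t : ℝ := ε' / (2 * ‖f‖ + 2) with htdef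
  have ht : 0 < t := by positivity
  obtain ⟨k, hk⟩ := ((clamp_tendsto_zero ν).eventually_lt_const ht).exists
  set R : ℝ := (k : ℝ) + 1 with hRdef
  have hR : 0 < R := by positivity
  set M : ℝ := ‖L‖ * R + 1 with hMdef
  have hUC := (isCompact_Icc (a := -M) (b := M)).uniformContinuousOn_of_continuous
      f.continuous.continuousOn
  rw [Metric.uniformContinuousOn_iff] at hUC
  obtain ⟨δ, hδ, hUCδ⟩ := hUC ε' hε'
  set δ₁ : ℝ := min (δ / 2) 1 with hδ₁def
  have hδ₁ : 0 < δ₁ := lt_min (by linarith) one_pos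
  have hδ₁1 : δ₁ ≤ 1 := min_le_right _ _
  have hδ₁2 : δ₁ ≤ δ / 2 := min_le_left _ _
  have E2 := Metric.tendsto_nhds.mp (hconv (f.compContinuous ⟨ℓ, hlcont⟩)) ε' hε'
  have E3 := Metric.tendsto_nhds.mp (hconv (clampBCF k)) t ht
  filter_upwards [key δ₁ hδ₁ R hR, E2, E3] with n hn1 hn2 hn3
  have hdn := hd_pos n
  -- integrability
  have hFi : Integrable (fun ω => f (d n * (g (A n ω, B n ω) - g (μA, μB)))) μ :=
    bcf_integrable f (((hgm n).sub measurable_const).const_mul (d n))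
  have hGi : Integrable
      (fun ω => f (ℓ (d n * (A n ω - μA), d n * (B n ω - μB)))) μ :=
    bcf_integrable f (hlmeas.comp (hYmeas n))
  have hΦi : Integrable
      (fun ω => clampBCF k (d n * (A n ω - μA), d n * (B n ω - μB))) μ :=
    bcf_integrable (clampBCF k) (hYmeas n)
  -- pointwise comparison
  have hpt : ∀ ω, |f (d n * (g (A n ω, B n ω) - g (μA, μB)))
        - f (ℓ (d n * (A n ω - μA), d n * (B n ω - μB)))|
      ≤ ε' + 2 * ‖f‖ * clampBCF k (d n * (A n ω - μA), d n * (B n ω - μB)) := by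
    intro ω
    by_cases hy : ‖((d n * (A n ω - μA), d n * (B n ω - μB)) : ℝ × ℝ)‖ ≤ R
    · have h1 := hn1 _ hy
      rw [harg n ω] at h1
      have hLy : |ℓ ((d n * (A n ω - μA), d n * (B n ω - μB)) : ℝ × ℝ)| ≤ ‖L‖ * R := by
        rw [← hLapp, ← Real.norm_eq_abs]
        exact (L.le_opNorm _).trans (mul_le_mul_of_nonneg_left hy (norm_nonneg L))
      have h1' := abs_le.mp h1
      have hLy' := abs_le.mp hLy
      have hu : d n * (g (A n ω, B n ω) - g (μA, μB)) ∈ Set.Icc (-M) M := by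
        rw [Set.mem_Icc]
        constructor <;> · rw [hMdef]; linarith
      have hl' : ℓ ((d n * (A n ω - μA), d n * (B n ω - μB)) : ℝ × ℝ) ∈ Set.Icc (-M) M := by
        rw [Set.mem_Icc]
        constructor <;> · rw [hMdef]; linarith
      have hdist : dist (d n * (g (A n ω, B n ω) - g (μA, μB)))
          (ℓ ((d n * (A n ω - μA), d n * (B n ω - μB)) : ℝ × ℝ)) < δ := by
        rw [Real.dist_eq]; linarith
      have hfd := hUCδ _ hu _ hl' hdist
      rw [Real.dist_eq] at hfd
      have hΦnn : 0 ≤ 2 * ‖f‖ * clampBCF k (d n * (A n ω - μA), d n * (B n ω - μB)) :=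
        mul_nonneg (by positivity) (clampBCF_nonneg _ _)
      linarith
    · have hΦ1 : clampBCF k ((d n * (A n ω - μA), d n * (B n ω - μB)) : ℝ × ℝ) = 1 := by
        apply clampBCF_eq_one
        push_neg at hy
        rw [hRdef] at hy
        linarith
      rw [hΦ1, mul_one]
      have h2 := f.norm_coe_le_norm (d n * (g (A n ω, B n ω) - g (μA, μB)))
      have h3 := f.norm_coe_le_norm (ℓ ((d n * (A n ω - μA), d n * (B n ω - μB)) : ℝ × ℝ))
      rw [Real.norm_eq_abs] at h2 h3
      have h2' := abs_le.mp h2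
      have h3' := abs_le.mp h3
      rw [abs_le]
      constructor <;> linarith
  -- integral comparison
  have hstep : |(∫ ω, f (d n * (g (A n ω, B n ω) - g (μA, μB))) ∂μ)
      - ∫ ω, f (ℓ (d n * (A n ω - μA), d n * (B n ω - μB))) ∂μ|
      ≤ ε' + 2 * ‖f‖ * ∫ ω, clampBCF k (d n * (A n ω - μA), d n * (B n ω - μB)) ∂μ := by
    rw [← integral_sub hFi hGi]
    have habs : |∫ ω, (f (d n * (g (A n ω, B n ω) - g (μA, μB)))
        - f (ℓ (d n * (A n ω - μA), d n * (B n ω - μB)))) ∂μ|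
        ≤ ∫ ω, |f (d n * (g (A n ω, B n ω) - g (μA, μB)))
            - f (ℓ (d n * (A n ω - μA), d n * (B n ω - μB)))| ∂μ := by
      have := norm_integral_le_integral_norm (μ := μ)
        (f := fun ω => f (d n * (g (A n ω, B n ω) - g (μA, μB)))
          - f (ℓ (d n * (A n ω - μA), d n * (B n ω - μB))))
      simpa [Real.norm_eq_abs] using this
    refine habs.trans ?_
    have hmono := integral_mono (μ := μ) (hFi.sub hGi).abs
      ((integrable_const ε').add (hΦi.const_mul (2 * ‖f‖))) hpt
    refine hmono.trans_eq ?_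
    simp only [Pi.add_apply]
    rw [integral_add (integrable_const ε') (hΦi.const_mul (2 * ‖f‖)),
      integral_const, integral_const_mul]
    simp
  -- conclusion
  rw [Real.dist_eq] at hn2 hn3 ⊢
  simp only [BoundedContinuousFunction.compContinuous_apply, ContinuousMap.coe_mk] at hn2
  have hΦlt : (∫ ω, clampBCF k (d n * (A n ω - μA), d n * (B n ω - μB)) ∂μ) < 2 * t := by
    have := abs_lt.mp hn3
    linarith
  have hΦnn : 0 ≤ ∫ ω, clampBCF k (d n * (A n ω - μA), d n * (B n ω - μB)) ∂μ :=
    integral_nonneg fun ω => clampBCF_nonneg _ _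
  have hteq : t * (2 * ‖f‖ + 2) = ε' := by
    rw [htdef]; field_simp
  have h2fΦ : 2 * ‖f‖ * (∫ ω, clampBCF k (d n * (A n ω - μA), d n * (B n ω - μB)) ∂μ)
      ≤ 2 * ε' := by nlinarith
  have htri := abs_sub_le (∫ ω, f (d n * (g (A n ω, B n ω) - g (μA, μB))) ∂μ)
    (∫ ω, f (ℓ (d n * (A n ω - μA), d n * (B n ω - μB))) ∂μ)
    (∫ p, f (ℓ p) ∂ν)
  have hε'eq : ε' = ε / 5 := hε'def
  linarith
end
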